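/- Let α ∈ (0,π), let (θₘ)ₘ∈ℤ be real numbers and (λₙ)ₙ∈ℤ positive real numbers, and define the discrete circular cone f : ℤ² → ℝ³ by f(m,n) := λₙ·(sin α cos θₘ, sin α sin θₘ, cos α). Then for every (m,n) the four diagonal neighbours f(m−1,n−1), f(m+1,n−1), f(m+1,n+1), f(m−1,n+1) are concyclic. (This is the symmetry property by which discrete cones satisfy the discrete isothermic 5-point-sphere condition; it is the converse direction of the discrete Vessiot theorem for cones.) -/

import Mathlib

noncomputable section

abbrev E3 : Type := EuclideanSpace ℝ (Fin 3)

/-- A set of points is concyclic if the points lie on a common circle or a common line. -/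
def ConcyclicOrCollinear (s : Set E3) : Prop :=
  EuclideanGeometry.Concyclic s ∨ Collinear ℝ s

open RealInnerProductSpace

lemma coplanar_of_subset_span2 (A B : E3) (s : Set E3)
    (h : s ⊆ (Submodule.span ℝ ({A, B} : Set E3) : Set E3)) : Coplanar ℝ s := by
  have h1 : vectorSpan ℝ s ≤ Submodule.span ℝ ({A, B} : Set E3) := by
    rw [vectorSpan_def]
    refine Submodule.span_le.2 ?_
    rintro v ⟨p, hp, q, hq, rfl⟩
    exact Submodule.sub_mem _ (h hp) (h hq)
  refine (Submodule.rank_mono h1).trans ?_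
  refine (rank_span_le _).trans ?_
  refine (Cardinal.mk_insert_le ..).trans ?_
  simp
  exact one_add_one_eq_two.le

set_option maxHeartbeats 2000000

/-- For a discrete circular cone
`f(m,n) = λₙ·(sin α cos θₘ, sin α sin θₘ, cos α)` with `α ∈ (0,π)` and `λₙ > 0`, the four
diagonal neighbours of every vertex are concircular. -/
theorem cone_diagonals_concircular
    (α : ℝ) (hα : α ∈ Set.Ioo 0 Real.pi) (θ : ℤ → ℝ)
    (lam : ℤ → ℝ) (hlam : ∀ n : ℤ, 0 < lam n)
    (f : ℤ × ℤ → E3)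
    (hf : ∀ m n : ℤ, f (m, n) = lam n • (WithLp.equiv 2 (Fin 3 → ℝ)).symm
      ![Real.sin α * Real.cos (θ m), Real.sin α * Real.sin (θ m), Real.cos α]) :
    ∀ m n : ℤ, ConcyclicOrCollinear
      {f (m - 1, n - 1), f (m + 1, n - 1), f (m + 1, n + 1), f (m - 1, n + 1)} := by
  intro m n
  set a := θ (m - 1) with hadef
  set b := θ (m + 1) with hbdef
  set μ := lam (n - 1) with hμdef
  set ν := lam (n + 1) with hνdef
  set A : E3 := (WithLp.equiv 2 (Fin 3 → ℝ)).symm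
    ![Real.sin α * Real.cos a, Real.sin α * Real.sin a, Real.cos α] with hAdef
  set B : E3 := (WithLp.equiv 2 (Fin 3 → ℝ)).symm
    ![Real.sin α * Real.cos b, Real.sin α * Real.sin b, Real.cos α] with hBdef
  have h1 : f (m - 1, n - 1) = μ • A := hf _ _
  have h2 : f (m + 1, n - 1) = μ • B := hf _ _
  have h3 : f (m + 1, n + 1) = ν • B := hf _ _
  have h4 : f (m - 1, n + 1) = ν • A := hf _ _
  rw [h1, h2, h3, h4]
  have hAA : ⟪A, A⟫ = 1 := by
    simp only [hAdef, PiLp.inner_apply, Fin.sum_univ_three]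
    simp [mul_pow, sq_abs]
    nlinarith [Real.sin_sq_add_cos_sq α, Real.sin_sq_add_cos_sq a]
  have hBB : ⟪B, B⟫ = 1 := by
    simp only [hBdef, PiLp.inner_apply, Fin.sum_univ_three]
    simp [mul_pow, sq_abs]
    nlinarith [Real.sin_sq_add_cos_sq α, Real.sin_sq_add_cos_sq b]
  have hA1 : ‖A‖ = 1 := by
    rw [norm_eq_sqrt_real_inner, hAA, Real.sqrt_one]
  have hB1 : ‖B‖ = 1 := by
    rw [norm_eq_sqrt_real_inner, hBB, Real.sqrt_one]
  set s : ℝ := ⟪A, B⟫ with hsdef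
  have hBA : ⟪B, A⟫ = s := by rw [real_inner_comm]
  have hsle : -1 ≤ s := by
    have := abs_real_inner_le_norm A B
    rw [hA1, hB1] at this
    have := abs_le.1 this
    linarith [this.1]
  rcases eq_or_lt_of_le hsle with heq | hlt
  · -- s = -1 : A = -B, all points collinear
    have hAB : A = -B := by
      have : ⟪A, -B⟫ = 1 := by rw [inner_neg_right]; linarith
      have hnB : ‖(-B : E3)‖ = 1 := by rw [norm_neg, hB1]
      exact (inner_eq_one_iff_of_norm_eq_one hA1 hnB).1 this
    right
    rw [collinear_iff_exists_forall_eq_smul_vadd]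
    refine ⟨0, A, ?_⟩
    rintro p hp
    simp only [Set.mem_insert_iff, Set.mem_singleton_iff] at hp
    rcases hp with rfl | rfl | rfl | rfl
    · exact ⟨μ, by simp⟩
    · exact ⟨-μ, by simp [hAB]⟩
    · exact ⟨-ν, by simp [hAB]⟩
    · exact ⟨ν, by simp⟩
  · -- s > -1 : cospherical + coplanar
    left
    have h1s : (0:ℝ) < 1 + s := by linarith
    set x : ℝ := (μ + ν) / (2 * (1 + s)) with hxdef
    have hx : 2 * x * (1 + s) = μ + ν := by
      field_simp [hxdef]
      rw [hxdef]
      field_simp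
    set c : E3 := x • (A + B) with hcdef
    have valA : ∀ t : ℝ, ⟪t • A - c, t • A - c⟫ = t^2 - 2*t*x*(1+s) + x^2*(2+2*s) := by
      intro t
      simp only [hcdef, inner_sub_left, inner_sub_right, inner_smul_left, inner_smul_right,
        inner_add_left, inner_add_right, hAA, hBB, hBA, ← hsdef, RCLike.conj_to_real]
      ring
    have valB : ∀ t : ℝ, ⟪t • B - c, t • B - c⟫ = t^2 - 2*t*x*(1+s) + x^2*(2+2*s) := by
      intro t
      simp only [hcdef, inner_sub_left, inner_sub_right, inner_smul_left, inner_smul_right,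
        inner_add_left, inner_add_right, hAA, hBB, hBA, ← hsdef, RCLike.conj_to_real]
      ring
    have key : ∀ p ∈ ({μ • A, μ • B, ν • B, ν • A} : Set E3),
        ⟪p - c, p - c⟫ = x^2*(2+2*s) - μ*ν := by
      rintro p hp
      simp only [Set.mem_insert_iff, Set.mem_singleton_iff] at hp
      rcases hp with rfl | rfl | rfl | rfl
      · rw [valA]; linear_combination (-μ) * hx
      · rw [valB]; linear_combination (-μ) * hx
      · rw [valB]; linear_combination (-ν) * hx
      · rw [valA]; linear_combination (-ν) * hx
    constructor
    · refine ⟨c, Real.sqrt (x^2*(2+2*s) - μ*ν), ?_⟩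
      intro p hp
      rw [dist_eq_norm, ← Real.sqrt_sq (norm_nonneg (p - c)), ← real_inner_self_eq_norm_sq,
        key p hp]
    · refine coplanar_of_subset_span2 A B _ ?_
      rintro p hp
      simp only [Set.mem_insert_iff, Set.mem_singleton_iff] at hp
      have hAmem : A ∈ Submodule.span ℝ ({A, B} : Set E3) :=
        Submodule.subset_span (by simp)
      have hBmem : B ∈ Submodule.span ℝ ({A, B} : Set E3) :=
        Submodule.subset_span (by simp)
      rcases hp with rfl | rfl | rfl | rfl
      · exact Submodule.smul_mem _ _ hAmem
      · exact Submodule.smul_mem _ _ hBmem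
      · exact Submodule.smul_mem _ _ hBmem
      · exact Submodule.smul_mem _ _ hAmem
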